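/- arXiv:2306.12342 — 2 statements merged into one kernel-verified Lean document; each statement's English description precedes it below -/
import Mathlib

section
/- Let m, k, N be positive integers and let E = {v_1,…,v_N} ⊂ R^m be a generic set of nonzero vectors. Suppose (1/p_j, λ_j)_{j=1}^N with 1/p_j ∈ (0,1) satisfies conditions (Scaling), (v1), (v2), (I), and that λ_j < 0 for at least one index j. Let j_0 be an index with λ_{j_0} = min{λ_j : j = 1,…,N}. Then there exist a nonempty finite index set ζ, real exponent vectors β^{(α)} = (β_1^{(α)},…,β_N^{(α)}) for α ∈ ζ, and a finite constant C such that: (i) for each α ∈ ζ the family (1/p_j, β_j^{(α)})_{j=1}^N satisfies (Scaling), (v1), (v2), (I); (ii) β_{j_0}^{(α)} = 0 for all α ∈ ζ; (iii) β_j^{(α)} = λ_j whenever λ_j < 0 and j ≠ j_0; (iv) 0 ≤ β_j^{(α)} ≤ λ_j whenever λ_j ≥ 0; and (v) for all nonnegative measurable f_1,…,f_N on R^k, Λ(f_1,…,f_N) ≤ C Σ_{α∈ζ} Λ(|·|^{λ_1−β_1^{(α)}} f_1, …, |·|^{λ_N−β_N^{(α)}} f_N), where |·|^{μ} f denotes the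 function y ↦ |y|^{μ} f(y) on R^k. -/
open MeasureTheory ENNReal
open scoped Classical

/-- The dot product `v · x ∈ ℝᵏ` for `v ∈ ℝᵐ` and `x ∈ (ℝᵏ)ᵐ`. -/
noncomputable def dotv {m k : ℕ} (v : Fin m → ℝ)
    (x : Fin m → EuclideanSpace ℝ (Fin k)) : EuclideanSpace ℝ (Fin k) :=
  ∑ i, v i • x i

/-- The Brascamp–Lieb form `Λ(f₁,…,f_N) = ∫ ∏ f_j(v_j · x) dx`. -/
noncomputable def BLform {m k N : ℕ} (v : Fin N → Fin m → ℝ)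
    (f : Fin N → EuclideanSpace ℝ (Fin k) → ℝ≥0∞) : ℝ≥0∞ :=
  ∫⁻ x : Fin m → EuclideanSpace ℝ (Fin k), ∏ j, f j (dotv (v j) x)

/-- The weighted norm `‖f‖_{L^p_α} = ‖ |·|^α f ‖_{L^p}`. -/
noncomputable def wnorm {k : ℕ} (p α : ℝ)
    (f : EuclideanSpace ℝ (Fin k) → ℝ≥0∞) : ℝ≥0∞ :=
  (∫⁻ y : EuclideanSpace ℝ (Fin k), ((‖y‖₊ : ℝ≥0∞) ^ α * f y) ^ p) ^ (1 / p)

/-- A family of vectors in `ℝᵐ` is generic if every subfamily of cardinality `m`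
is a basis of `ℝᵐ`. -/
def IsGeneric {m N : ℕ} (v : Fin N → Fin m → ℝ) : Prop :=
  ∀ s : Finset (Fin N), s.card = m →
    LinearIndependent ℝ (fun i : s => v i.1) ∧
      Submodule.span ℝ (v '' ↑s) = ⊤


/-- Bottom-`r` selection. -/
private lemma exists_bottom {ι : Type*} [DecidableEq ι] (g : ι → ℝ) :
    ∀ (r : ℕ) (U : Finset ι), r ≤ U.card →
    ∃ B ⊆ U, B.card = r ∧ ∀ b ∈ B, ∀ i ∈ U \ B, g b ≤ g i := by
  intro r
  induction r with
  | zero => intro U _; exact ⟨∅, Finset.empty_subset U, rfl, by simp⟩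
  | succ r ih =>
    intro U hU
    obtain ⟨B, hBU, hBcard, hBmin⟩ := ih U (Nat.le_of_succ_le hU)
    have hne : (U \ B).Nonempty := by
      rw [← Finset.card_pos, Finset.card_sdiff_of_subset hBU]; omega
    obtain ⟨b0, hb0, hb0min⟩ := Finset.exists_min_image (U \ B) g hne
    refine ⟨insert b0 B, Finset.insert_subset (Finset.mem_sdiff.1 hb0).1 hBU, ?_, ?_⟩
    · rw [Finset.card_insert_of_notMem (Finset.mem_sdiff.1 hb0).2, hBcard]
    · intro b hb i hi
      have hiUB : i ∈ U \ B := by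
        rw [Finset.mem_sdiff] at hi ⊢
        exact ⟨hi.1, fun h => hi.2 (Finset.mem_insert_of_mem h)⟩
      rcases Finset.mem_insert.1 hb with rfl | hbB
      · exact hb0min i hiUB
      · exact hBmin b hbB i hiUB

/-- `dotv` as a linear map in the vector argument. -/
private noncomputable def dotvL {m k : ℕ} (x : Fin m → EuclideanSpace ℝ (Fin k)) :
    (Fin m → ℝ) →ₗ[ℝ] EuclideanSpace ℝ (Fin k) where
  toFun v := dotv v x
  map_add' a b := by simp [dotv, add_smul, Finset.sum_add_distrib]
  map_smul' c a := by simp [dotv, smul_smul, Finset.smul_sum]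

/-- `dotv` as a linear map in `x`. -/
private noncomputable def dotvX {m k : ℕ} (v : Fin m → ℝ) :
    (Fin m → EuclideanSpace ℝ (Fin k)) →ₗ[ℝ] EuclideanSpace ℝ (Fin k) where
  toFun x := dotv v x
  map_add' x y := by simp [dotv, smul_add, Finset.sum_add_distrib]
  map_smul' c x := by
    simp [dotv, Finset.smul_sum, smul_comm c]

private lemma measurable_dotv {m k : ℕ} (v : Fin m → ℝ) :
    Measurable (fun x : Fin m → EuclideanSpace ℝ (Fin k) => dotv v x) :=
  (LinearMap.continuous_of_finiteDimensional (dotvX v)).measurable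

private lemma null_dotv {m k : ℕ} (hk : 0 < k) (v : Fin m → ℝ) (hv : v ≠ 0) :
    (volume : Measure (Fin m → EuclideanSpace ℝ (Fin k))) {x | dotv v x = 0} = 0 := by
  haveI : (volume : Measure (Fin m → EuclideanSpace ℝ (Fin k))).IsAddHaarMeasure :=
    MeasureTheory.Measure.pi.isAddHaarMeasure _
  have hset : {x : Fin m → EuclideanSpace ℝ (Fin k) | dotv v x = 0}
      = (LinearMap.ker (dotvX (k := k) v) : Set _) := by
    ext x; simp [LinearMap.mem_ker, dotvX]; exact Iff.rfl
  rw [hset]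
  refine MeasureTheory.Measure.addHaar_submodule _ _ ?_
  intro htop
  obtain ⟨i0, hi0⟩ : ∃ i0, v i0 ≠ 0 := by
    by_contra h; push_neg at h; exact hv (funext h)
  set u : EuclideanSpace ℝ (Fin k) := EuclideanSpace.single ⟨0, hk⟩ (1:ℝ) with hu
  have hune : u ≠ 0 := by
    intro h
    have := congrArg (fun w : EuclideanSpace ℝ (Fin k) => w ⟨0, hk⟩) h
    simp [hu, EuclideanSpace.single_apply] at this
  have hxmem : Pi.single i0 u ∈ LinearMap.ker (dotvX (k := k) v) := htop ▸ Submodule.mem_top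
  rw [LinearMap.mem_ker] at hxmem
  have : dotv v (Pi.single i0 u) = v i0 • u := by
    rw [dotv, Finset.sum_eq_single i0]
    · rw [Pi.single_eq_same]
    · intro b _ hb; rw [Pi.single_eq_of_ne hb, smul_zero]
    · intro h; exact absurd (Finset.mem_univ i0) h
  have : dotv v (Pi.single i0 u) ≠ 0 := by
    rw [this]; exact smul_ne_zero hi0 hune
  exact this hxmem

set_option maxHeartbeats 1000000 in
/-- The induction-step lemma: if some `λ_j < 0`, one can find a finite family of
exponent vectors `β⁽ᵅ⁾` satisfying the same conditions, vanishing at the minimal index,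
agreeing with `λ` at the other negative entries, lying in `[0, λ_j]` at nonnegative
entries, and controlling the form. -/
theorem inductionStep (m k N : ℕ) (hm : 0 < m) (hk : 0 < k) (hN : 0 < N)
    (v : Fin N → Fin m → ℝ) (hv0 : ∀ j, v j ≠ 0) (hvinj : Function.Injective v)
    (hgen : IsGeneric v)
    (p lam : Fin N → ℝ)
    (hp : ∀ j, 0 < 1 / p j ∧ 1 / p j < 1)
    (hScaling : ∑ j, (1 / p j + lam j / (k : ℝ)) = (m : ℝ))
    (hv1 : ∀ V : Submodule ℝ (Fin m → ℝ), V ≠ ⊥ → V ≠ ⊤ →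
      (m : ℝ) - (Module.finrank ℝ V : ℝ) <
        ∑ j ∈ Finset.univ.filter (fun j => v j ∉ V), (1 / p j + lam j / (k : ℝ)))
    (hv2 : ∀ V : Submodule ℝ (Fin m → ℝ),
      0 ≤ ∑ j ∈ Finset.univ.filter (fun j => v j ∉ V), lam j)
    (hI : 1 ≤ ∑ j, 1 / p j)
    (hneg : ∃ j, lam j < 0)
    (j0 : Fin N) (hj0 : ∀ j, lam j0 ≤ lam j) :
    ∃ (n : ℕ) (β : Fin n → Fin N → ℝ) (C : ℝ≥0∞), 0 < n ∧ C ≠ ⊤ ∧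
      (∀ a : Fin n,
        (∑ j, (1 / p j + β a j / (k : ℝ)) = (m : ℝ)) ∧
        (∀ V : Submodule ℝ (Fin m → ℝ), V ≠ ⊥ → V ≠ ⊤ →
          (m : ℝ) - (Module.finrank ℝ V : ℝ) <
            ∑ j ∈ Finset.univ.filter (fun j => v j ∉ V), (1 / p j + β a j / (k : ℝ))) ∧
        (∀ V : Submodule ℝ (Fin m → ℝ),
          0 ≤ ∑ j ∈ Finset.univ.filter (fun j => v j ∉ V), β a j) ∧
        (1 ≤ ∑ j, 1 / p j) ∧
        β a j0 = 0 ∧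
        (∀ j, lam j < 0 → j ≠ j0 → β a j = lam j) ∧
        (∀ j, 0 ≤ lam j → 0 ≤ β a j ∧ β a j ≤ lam j)) ∧
      (∀ f : Fin N → EuclideanSpace ℝ (Fin k) → ℝ≥0∞, (∀ j, Measurable (f j)) →
        BLform v f ≤ C * ∑ a : Fin n,
          BLform v (fun j y => (‖y‖₊ : ℝ≥0∞) ^ (lam j - β a j) * f j y)) := by
  classical
  -- basic positivity facts
  have hkR : (0 : ℝ) < k := Nat.cast_pos.mpr hk
  have hlj0 : lam j0 < 0 := by obtain ⟨j, hj⟩ := hneg; exact lt_of_le_of_lt (hj0 j) hj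
  set s : ℝ := -lam j0 with hs_def
  have hs : 0 < s := by simp [hs_def]; linarith
  have hfull : ∀ S : Finset (Fin N), S.card = m → Submodule.span ℝ (v '' ↑S) = ⊤ :=
    fun S h => (hgen S h).2
  have hfrk : Module.finrank ℝ (Fin m → ℝ) = m := by
    simp [Module.finrank_pi]
  -- N ≥ m
  have hNm : m ≤ N := by
    by_contra hcon
    push_neg at hcon
    set V : Submodule ℝ (Fin m → ℝ) := Submodule.span ℝ (v '' ↑(Finset.univ : Finset (Fin N)))
      with hV
    have hmem : ∀ j, v j ∈ V := fun j =>
      Submodule.subset_span ⟨j, by simp⟩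
    have hVrk : Module.finrank ℝ V ≤ N := by
      have h1 : Submodule.span ℝ (↑(Finset.univ.image v) : Set (Fin m → ℝ)) = V := by
        rw [Finset.coe_image, hV]
      have := finrank_span_finset_le_card (R := ℝ) (Finset.univ.image v)
      rw [Set.finrank, h1] at this
      exact le_trans this (le_trans (Finset.card_image_le) (by simp))
    have hVtop : V ≠ ⊤ := by
      intro h
      rw [h, finrank_top, hfrk] at hVrk
      omega
    have hVbot : V ≠ ⊥ := by
      intro h
      exact hv0 j0 (by simpa [h, Submodule.mem_bot] using hmem j0)
    have h1 := hv1 V hVbot hVtop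
    have h2 : Finset.univ.filter (fun j => v j ∉ V) = ∅ := by
      apply Finset.filter_false_of_mem
      intro j _; simp [hmem j]
    rw [h2] at h1
    simp only [Finset.sum_empty] at h1
    have : Module.finrank ℝ V < m := by
      have := Submodule.finrank_le V
      rw [hfrk] at this
      rcases lt_or_eq_of_le this with h | h
      · exact h
      · exact absurd (Submodule.eq_top_of_finrank_eq (by rw [hfrk]; exact h)) hVtop
    have : (Module.finrank ℝ V : ℝ) < m := by exact_mod_cast this
    linarith
  -- linear independence of small subfamilies
  have hindep : ∀ S : Finset (Fin N), S.card ≤ m →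
      LinearIndependent ℝ (fun i : S => v i.1) := by
    intro S hS
    obtain ⟨T, hST, _, hTcard⟩ := Finset.exists_subsuperset_card_eq
      (Finset.subset_univ S) hS (by simpa using hNm)
    have hT := (hgen T hTcard).1
    exact hT.comp (fun i : S => (⟨i.1, hST i.2⟩ : T))
      (by intro a b hab
          rw [Subtype.mk_eq_mk] at hab
          exact Subtype.ext hab)
  -- non-membership in spans of small subfamilies
  have hnotmem : ∀ S : Finset (Fin N), S.card < m → ∀ j ∉ S,
      v j ∉ Submodule.span ℝ (v '' ↑S) := by
    intro S hS j hj
    have hT : (insert j S).card ≤ m := by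
      rw [Finset.card_insert_of_notMem hj]; omega
    have hind := hindep (insert j S) hT
    have hx : (⟨j, Finset.mem_insert_self j S⟩ : (insert j S : Finset (Fin N))) ∉
        {i : (insert j S : Finset (Fin N)) | i.1 ∈ S} := by
      simp [hj]
    have := hind.notMem_span_image (x := ⟨j, Finset.mem_insert_self j S⟩)
      (s := {i : (insert j S : Finset (Fin N)) | i.1 ∈ S}) hx
    have himg : (fun i : (insert j S : Finset (Fin N)) => v i.1) ''
        {i : (insert j S : Finset (Fin N)) | i.1 ∈ S} = v '' ↑S := by
      ext w
      constructor
      · rintro ⟨i, hi, rfl⟩; exact ⟨i.1, hi, rfl⟩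
      · rintro ⟨i, hi, rfl⟩
        exact ⟨⟨i, Finset.mem_insert_of_mem hi⟩, hi, rfl⟩
    rw [himg] at this
    exact this
  -- identification of the filter set for spans of small families
  have hspanfilter : ∀ S : Finset (Fin N), S.card < m →
      Finset.univ.filter (fun j => v j ∉ Submodule.span ℝ (v '' ↑S)) = Finset.univ \ S := by
    intro S hS
    ext j
    simp only [Finset.mem_filter, Finset.mem_univ, true_and, Finset.mem_sdiff]
    constructor
    · intro h hjS
      exact h (Submodule.subset_span ⟨j, hjS, rfl⟩)
    · intro h
      exact hnotmem S hS j h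
  -- the number of vectors in a proper subspace is at most its rank
  have hTcard : ∀ V : Submodule ℝ (Fin m → ℝ), V ≠ ⊤ →
      (Finset.univ.filter (fun j => v j ∈ V)).card ≤ Module.finrank ℝ V := by
    intro V hVtop
    set T := Finset.univ.filter (fun j => v j ∈ V) with hT
    have hTm : T.card ≤ m := by
      by_contra hcon
      push_neg at hcon
      obtain ⟨S, hST, hScard⟩ := Finset.exists_subset_card_eq (le_of_lt hcon)
      have : Submodule.span ℝ (v '' ↑S) ≤ V := by
        rw [Submodule.span_le]
        rintro w ⟨i, hi, rfl⟩
        have : i ∈ T := hST hi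
        rw [hT, Finset.mem_filter] at this
        exact this.2
      rw [hfull S hScard] at this
      exact hVtop (top_le_iff.mp this)
    have hmemV : ∀ i : T, v i.1 ∈ V := fun i => (Finset.mem_filter.1 i.2).2
    have hind : LinearIndependent ℝ (fun i : T => (⟨v i.1, hmemV i⟩ : V)) := by
      apply LinearIndependent.of_comp V.subtype
      exact hindep T hTm
    have := hind.fintype_card_le_finrank
    simpa using this
  -- singleton bound : 1/p j + lam j / k < 1 when m ≥ 2
  have hsingle : 1 < m → ∀ j, 1 / p j + lam j / (k : ℝ) < 1 := by
    intro hm2 j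
    set V : Submodule ℝ (Fin m → ℝ) := Submodule.span ℝ {v j} with hV
    have hVbot : V ≠ ⊥ := by
      rw [hV, Ne, Submodule.span_singleton_eq_bot]
      exact hv0 j
    have hVrk : Module.finrank ℝ V = 1 := finrank_span_singleton (hv0 j)
    have hVtop : V ≠ ⊤ := by
      intro h
      rw [h, finrank_top, hfrk] at hVrk
      omega
    have hfil : Finset.univ.filter (fun i => v i ∉ V) = Finset.univ \ {j} := by
      have : V = Submodule.span ℝ (v '' ↑({j} : Finset (Fin N))) := by
        rw [hV]; congr 1; simp
      rw [this]
      exact hspanfilter {j} (by simpa using hm2)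
    have h1 := hv1 V hVbot hVtop
    rw [hfil, hVrk] at h1
    have hsum : ∑ i ∈ Finset.univ \ {j}, (1 / p i + lam i / (k : ℝ))
        = (m : ℝ) - (1 / p j + lam j / (k : ℝ)) := by
      rw [← hScaling]
      rw [Finset.sdiff_singleton_eq_erase]
      rw [← Finset.add_sum_erase Finset.univ _ (Finset.mem_univ j)]
      ring
    rw [hsum] at h1
    push_cast at h1
    linarith
  -- the index family
  set 𝔅 : Finset (Finset (Fin N)) :=
    Finset.univ.filter (fun B => B.card = m - 1 ∧ j0 ∉ B) with h𝔅
  have h𝔅mem : ∀ B, B ∈ 𝔅 ↔ B.card = m - 1 ∧ j0 ∉ B := by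
    intro B; simp [h𝔅]
  have h𝔅ne : 𝔅.Nonempty := by
    obtain ⟨B, hBsub, hBcard⟩ := Finset.exists_subset_card_eq
      (s := Finset.univ.erase j0) (n := m - 1)
      (by rw [Finset.card_erase_of_mem (Finset.mem_univ j0)]; simp; omega)
    refine ⟨B, (h𝔅mem B).2 ⟨hBcard, fun h => ?_⟩⟩
    exact (Finset.mem_erase.1 (hBsub h)).1 rfl
  -- the redistribution data for each B
  set Q : Finset (Fin N) → Finset (Fin N) :=
    fun B => Finset.univ.filter (fun i => i ∉ B ∧ i ≠ j0 ∧ 0 < lam i) with hQdef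
  have hQmem : ∀ B i, i ∈ Q B ↔ i ∉ B ∧ i ≠ j0 ∧ 0 < lam i := by
    intro B i; simp [hQdef]
  set SQ : Finset (Fin N) → ℝ := fun B => ∑ i ∈ Q B, lam i with hSQdef
  -- key mass bound : SQ B ≥ s for B ∈ 𝔅
  have hSQ : ∀ B ∈ 𝔅, s ≤ SQ B := by
    intro B hB
    obtain ⟨hBcard, hBj0⟩ := (h𝔅mem B).1 hB
    have hBlt : B.card < m := by omega
    have h2 := hv2 (Submodule.span ℝ (v '' ↑B))
    rw [hspanfilter B hBlt] at h2
    have hsplit := Finset.sum_filter_add_sum_filter_not (Finset.univ \ B)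
      (fun i => 0 < lam i) lam
    have hposQ : (Finset.univ \ B).filter (fun i => 0 < lam i) = Q B := by
      ext i
      simp only [Finset.mem_filter, Finset.mem_sdiff, Finset.mem_univ, true_and, hQmem]
      constructor
      · rintro ⟨hiB, hpos⟩
        exact ⟨hiB, fun h => by rw [h] at hpos; linarith, hpos⟩
      · rintro ⟨hiB, _, hpos⟩
        exact ⟨hiB, hpos⟩
    have hnegsum : ∑ i ∈ (Finset.univ \ B).filter (fun i => ¬ 0 < lam i), lam i ≤ lam j0 := by
      have hj0mem : j0 ∈ (Finset.univ \ B).filter (fun i => ¬ 0 < lam i) := by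
        simp [hBj0]; linarith
      rw [← Finset.add_sum_erase _ _ hj0mem]
      have : ∑ i ∈ ((Finset.univ \ B).filter (fun i => ¬ 0 < lam i)).erase j0, lam i ≤ 0 := by
        apply Finset.sum_nonpos
        intro i hi
        have := (Finset.mem_filter.1 (Finset.mem_of_mem_erase hi)).2
        linarith
      linarith
    rw [hposQ] at hsplit
    have : SQ B + lam j0 ≥ 0 := by
      rw [hSQdef]
      have := hnegsum
      simp only at hsplit ⊢
      linarith
    rw [hs_def]
    linarith
  have hSQpos : ∀ B ∈ 𝔅, 0 < SQ B := fun B hB => lt_of_lt_of_le hs (hSQ B hB)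
  -- the redistribution function
  set gam : Finset (Fin N) → Fin N → ℝ :=
    fun B i => if i ∈ Q B then (s / SQ B) * lam i else 0 with hgamdef
  have hgam_nonneg : ∀ B ∈ 𝔅, ∀ i, 0 ≤ gam B i := by
    intro B hB i
    rw [hgamdef]
    by_cases hi : i ∈ Q B
    · simp only [hi, if_true]
      have := ((hQmem B i).1 hi).2.2
      have := hSQpos B hB
      positivity
    · simp [hi]
  have hgam_sum : ∀ B ∈ 𝔅, ∑ i, gam B i = s := by
    intro B hB
    rw [hgamdef]
    rw [Finset.sum_ite_mem, Finset.univ_inter, ← Finset.mul_sum]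
    exact div_mul_cancel₀ s (ne_of_gt (hSQpos B hB))
  have hgam_le : ∀ B ∈ 𝔅, ∀ i, 0 ≤ lam i → gam B i ≤ lam i := by
    intro B hB i hlami
    rw [hgamdef]
    by_cases hi : i ∈ Q B
    · simp only [hi, if_true]
      have hc1 : s / SQ B ≤ 1 := by
        rw [div_le_one (hSQpos B hB)]
        exact hSQ B hB
      nlinarith
    · simpa [hi] using hlami
  have hgam_zero : ∀ B i, i ∉ Q B → gam B i = 0 := by
    intro B i hi; simp [hgamdef, hi]
  have hgamj0 : ∀ B, gam B j0 = 0 := by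
    intro B
    apply hgam_zero
    rw [hQmem]
    push_neg
    intro _ h
    exact absurd rfl h
  -- the exponents
  set bet : Finset (Fin N) → Fin N → ℝ :=
    fun B j => if j = j0 then 0 else lam j - gam B j with hbetdef
  have hbet_j0 : ∀ B, bet B j0 = 0 := by intro B; simp [hbetdef]
  have hdl : ∀ B j, lam j - bet B j = if j = j0 then lam j0 else gam B j := by
    intro B j
    rw [hbetdef]
    by_cases hj : j = j0
    · simp [hj]
    · simp [hj]
  have hbet_le : ∀ B ∈ 𝔅, ∀ j, j ≠ j0 → bet B j ≤ lam j := by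
    intro B hB j hj
    rw [hbetdef]
    simp only [hj, if_false]
    have := hgam_nonneg B hB j
    linarith
  -- sum of the differences
  have hdl_sum : ∀ B ∈ 𝔅, ∑ j, (lam j - bet B j) = 0 := by
    intro B hB
    have : ∀ j, lam j - bet B j = (if j = j0 then lam j0 else gam B j) := hdl B
    rw [Finset.sum_congr rfl (fun j _ => this j)]
    rw [← Finset.add_sum_erase _ _ (Finset.mem_univ j0)]
    have herase : ∑ j ∈ Finset.univ.erase j0, (if j = j0 then lam j0 else gam B j)
        = ∑ j ∈ Finset.univ.erase j0, gam B j := by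
      apply Finset.sum_congr rfl
      intro j hj
      rw [if_neg (Finset.mem_erase.1 hj).1]
    rw [herase]
    have : ∑ j ∈ Finset.univ.erase j0, gam B j = s := by
      have := hgam_sum B hB
      rw [← Finset.add_sum_erase _ _ (Finset.mem_univ j0), hgamj0 B] at this
      linarith
    rw [this]
    simp [hs_def]
  have hbet_sum : ∀ B ∈ 𝔅, ∑ j, bet B j = ∑ j, lam j := by
    intro B hB
    have h1 := hdl_sum B hB
    rw [Finset.sum_sub_distrib] at h1
    linarith
  -- (Scaling) for bet
  have hscal_bet : ∀ B ∈ 𝔅, ∑ j, (1 / p j + bet B j / (k : ℝ)) = (m : ℝ) := by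
    intro B hB
    have h1 : ∑ j, (1 / p j + bet B j / (k : ℝ))
        = ∑ j, (1 / p j + lam j / (k : ℝ)) - (∑ j, (lam j - bet B j)) / (k : ℝ) := by
      rw [Finset.sum_div, ← Finset.sum_sub_distrib]
      apply Finset.sum_congr rfl
      intro j _
      field_simp
      ring
    rw [h1, hdl_sum B hB, hScaling]
    simp
  -- (v1) for bet
  have hv1_bet : ∀ B ∈ 𝔅, ∀ V : Submodule ℝ (Fin m → ℝ), V ≠ ⊥ → V ≠ ⊤ →
      (m : ℝ) - (Module.finrank ℝ V : ℝ) <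
        ∑ j ∈ Finset.univ.filter (fun j => v j ∉ V), (1 / p j + bet B j / (k : ℝ)) := by
    intro B hB V hVbot hVtop
    set d := Module.finrank ℝ V with hd
    have hd1 : 1 ≤ d := by
      by_contra hcon
      push_neg at hcon
      interval_cases d
      · exact hVbot (Submodule.finrank_eq_zero.mp hd.symm)
    have hdm : d < m := by
      have := Submodule.finrank_lt (K := ℝ) (V := Fin m → ℝ) hVtop
      rwa [hfrk] at this
    have hm2 : 1 < m := lt_of_le_of_lt hd1 hdm
    -- each term over the inside indices is < 1
    have hterm : ∀ j, 1 / p j + bet B j / (k : ℝ) < 1 := by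
      intro j
      by_cases hj : j = j0
      · rw [hj, hbet_j0 B]
        simpa using (hp j0).2
      · have h1 : bet B j ≤ lam j := hbet_le B hB j hj
        have h2 := hsingle hm2 j
        have h3 : bet B j / (k:ℝ) ≤ lam j / (k:ℝ) := by gcongr
        linarith
    -- split the full sum
    have hsplit := Finset.sum_filter_add_sum_filter_not Finset.univ
      (fun j => v j ∉ V) (fun j => 1 / p j + bet B j / (k : ℝ))
    have hfilnot : Finset.univ.filter (fun j => ¬ v j ∉ V)
        = Finset.univ.filter (fun j => v j ∈ V) := by
      apply Finset.filter_congr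
      intro j _
      simp
    set T := Finset.univ.filter (fun j => v j ∈ V) with hT
    have hsumT : ∑ j ∈ T, (1 / p j + bet B j / (k : ℝ)) < d := by
      rcases Finset.eq_empty_or_nonempty T with hTe | hTne
      · rw [hTe]
        simp only [Finset.sum_empty]
        exact_mod_cast lt_of_lt_of_le zero_lt_one (by exact_mod_cast hd1)
      · have hlt : ∑ j ∈ T, (1 / p j + bet B j / (k : ℝ)) < ∑ j ∈ T, (1:ℝ) :=
          Finset.sum_lt_sum_of_nonempty hTne (fun j _ => hterm j)
        rw [Finset.sum_const, nsmul_eq_mul, mul_one] at hlt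
        have hcard : (T.card : ℝ) ≤ d := by
          exact_mod_cast hTcard V hVtop
        linarith
    have hfull_sum := hscal_bet B hB
    rw [hfilnot] at hsplit
    have : ∑ j ∈ Finset.univ.filter (fun j => v j ∉ V), (1 / p j + bet B j / (k : ℝ))
        = (m : ℝ) - ∑ j ∈ T, (1 / p j + bet B j / (k : ℝ)) := by
      rw [← hfull_sum, ← hsplit]; ring
    rw [this]
    linarith
  -- (v2) for bet
  have hv2_bet : ∀ B ∈ 𝔅, ∀ V : Submodule ℝ (Fin m → ℝ),
      0 ≤ ∑ j ∈ Finset.univ.filter (fun j => v j ∉ V), bet B j := by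
    intro B hB V
    set Tc := Finset.univ.filter (fun j => v j ∉ V) with hTc
    have hsub : ∑ j ∈ Tc, bet B j
        = ∑ j ∈ Tc, lam j - ∑ j ∈ Tc, (lam j - bet B j) := by
      rw [← Finset.sum_sub_distrib]; apply Finset.sum_congr rfl; intro j _; ring
    by_cases hj0V : v j0 ∈ V
    · -- j0 not in Tc
      have hj0Tc : j0 ∉ Tc := by
        rw [hTc, Finset.mem_filter]
        push_neg
        intro _; exact hj0V
      have hdlTc : ∑ j ∈ Tc, (lam j - bet B j) = ∑ j ∈ Tc, gam B j := by
        apply Finset.sum_congr rfl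
        intro j hj
        rw [hdl B j, if_neg]
        intro h; rw [h] at hj; exact hj0Tc hj
      have hgamTc_le : ∑ j ∈ Tc, gam B j ≤ s := by
        rw [← hgam_sum B hB]
        exact Finset.sum_le_sum_of_subset_of_nonneg (Finset.subset_univ Tc)
          (fun i _ _ => hgam_nonneg B hB i)
      by_cases hzero : ∑ j ∈ Tc, gam B j = 0
      · rw [hsub, hdlTc, hzero]
        have := hv2 V
        rw [← hTc] at this
        linarith
      · -- find an index with positive gam outside V
        obtain ⟨i1, hi1Tc, hi1⟩ := Finset.exists_ne_zero_of_sum_ne_zero hzero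
        have hi1Q : i1 ∈ Q B := by
          by_contra h
          exact hi1 (hgam_zero B i1 h)
        obtain ⟨hi1B, hi1j0, hi1pos⟩ := (hQmem B i1).1 hi1Q
        have hi1V : v i1 ∉ V := (Finset.mem_filter.1 hi1Tc).2
        have hVtop : V ≠ ⊤ := by
          intro h; rw [h] at hi1V; exact hi1V Submodule.mem_top
        set T := Finset.univ.filter (fun j => v j ∈ V) with hT
        have hj0T : j0 ∈ T := by
          rw [hT, Finset.mem_filter]; exact ⟨Finset.mem_univ j0, hj0V⟩
        have hTcard2 : T.card ≤ Module.finrank ℝ V := hTcard V hVtop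
        have hfr : Module.finrank ℝ V < m := by
          have := Submodule.finrank_lt (K := ℝ) (V := Fin m → ℝ) hVtop
          rwa [hfrk] at this
        set S' : Finset (Fin N) := insert i1 (T.erase j0) with hS'
        have hi1T : i1 ∉ T.erase j0 := by
          intro h
          exact hi1V (Finset.mem_filter.1 (Finset.mem_of_mem_erase h)).2
        have hS'card : S'.card = T.card := by
          rw [hS', Finset.card_insert_of_notMem hi1T,
            Finset.card_erase_of_mem hj0T]
          have : 1 ≤ T.card := Finset.card_pos.2 ⟨j0, hj0T⟩
          omega
        have hS'lt : S'.card < m := by rw [hS'card]; omega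
        have h2 := hv2 (Submodule.span ℝ (v '' ↑S'))
        rw [hspanfilter S' hS'lt] at h2
        have hsdiff : ∑ j ∈ Finset.univ \ S', lam j
            = ∑ j ∈ Finset.univ, lam j - ∑ j ∈ S', lam j :=
          Finset.sum_sdiff_eq_sub (Finset.subset_univ S')
        have hS'sum : ∑ j ∈ S', lam j = lam i1 + (∑ j ∈ T, lam j - lam j0) := by
          rw [hS', Finset.sum_insert hi1T, Finset.sum_erase_eq_sub hj0T]
        have huniv : ∑ j ∈ Finset.univ, lam j = ∑ j ∈ T, lam j + ∑ j ∈ Tc, lam j := by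
          rw [hT, hTc]
          rw [← Finset.sum_filter_add_sum_filter_not Finset.univ (fun j => v j ∈ V) lam]
        have hTclam : s + lam i1 ≤ ∑ j ∈ Tc, lam j := by
          rw [hsdiff, hS'sum, huniv] at h2
          rw [hs_def]
          linarith
        rw [hsub, hdlTc]
        have : lam i1 > 0 := hi1pos
        linarith
    · -- j0 ∈ Tc
      have hj0Tc : j0 ∈ Tc := by
        rw [hTc, Finset.mem_filter]; exact ⟨Finset.mem_univ j0, hj0V⟩
      have hdlTc : ∑ j ∈ Tc, (lam j - bet B j)
          = lam j0 + ∑ j ∈ Tc.erase j0, gam B j := by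
        rw [← Finset.add_sum_erase _ _ hj0Tc, hdl B j0, if_pos rfl]
        congr 1
        apply Finset.sum_congr rfl
        intro j hj
        rw [hdl B j, if_neg (Finset.mem_erase.1 hj).1]
      have hgamTc_le : ∑ j ∈ Tc.erase j0, gam B j ≤ s := by
        rw [← hgam_sum B hB]
        exact Finset.sum_le_sum_of_subset_of_nonneg (Finset.subset_univ _)
          (fun i _ _ => hgam_nonneg B hB i)
      have := hv2 V
      rw [← hTc] at this
      rw [hsub, hdlTc]
      have : 0 ≤ ∑ j ∈ Tc, lam j := this
      rw [hs_def] at hgamTc_le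
      linarith
  -- uniform coefficient bound
  have hC0 : ∃ C0 : ℝ, 1 ≤ C0 ∧ ∀ S : Finset (Fin N), S.card = m →
      ∀ x : Fin m → EuclideanSpace ℝ (Fin k),
        ‖dotv (v j0) x‖ ≤ C0 * ∑ i ∈ S, ‖dotv (v i) x‖ := by
    have hper : ∀ S : Finset (Fin N), ∃ c : ℝ, 0 ≤ c ∧ (S.card = m →
        ∀ x : Fin m → EuclideanSpace ℝ (Fin k),
          ‖dotv (v j0) x‖ ≤ c * ∑ i ∈ S, ‖dotv (v i) x‖) := by
      intro S
      by_cases hS : S.card = m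
      · have hsp : v j0 ∈ Submodule.span ℝ (↑(S.image v) : Set (Fin m → ℝ)) := by
          rw [Finset.coe_image, hfull S hS]
          exact Submodule.mem_top
        obtain ⟨g, -, hg⟩ := Submodule.mem_span_finset.1 hsp
        refine ⟨∑ i ∈ S, |g (v i)|, by positivity, fun _ x => ?_⟩
        have hrepr : dotv (v j0) x = ∑ w ∈ S.image v, g w • dotv w x := by
          have h := congrArg (dotvL (k := k) x) hg
          rw [map_sum] at h
          simp only [LinearMap.map_smul] at h
          exact h.symm
        have h1 : ‖dotv (v j0) x‖ ≤ ∑ w ∈ S.image v, |g w| * ‖dotv w x‖ := by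
          rw [hrepr]
          refine le_trans (norm_sum_le _ _) ?_
          apply Finset.sum_le_sum
          intro w _
          rw [norm_smul, Real.norm_eq_abs]
        have h2 : ∑ w ∈ S.image v, |g w| * ‖dotv w x‖
            = ∑ i ∈ S, |g (v i)| * ‖dotv (v i) x‖ := by
          rw [Finset.sum_image]
          intro a _ b _ hab
          exact hvinj hab
        calc ‖dotv (v j0) x‖ ≤ ∑ i ∈ S, |g (v i)| * ‖dotv (v i) x‖ := h2 ▸ h1
          _ ≤ ∑ i ∈ S, |g (v i)| * (∑ l ∈ S, ‖dotv (v l) x‖) := by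
              apply Finset.sum_le_sum
              intro i hi
              apply mul_le_mul_of_nonneg_left _ (abs_nonneg _)
              exact Finset.single_le_sum (f := fun l => ‖dotv (v l) x‖)
                (fun l _ => norm_nonneg _) hi
          _ = (∑ i ∈ S, |g (v i)|) * ∑ l ∈ S, ‖dotv (v l) x‖ := (Finset.sum_mul _ _ _).symm
      · exact ⟨0, le_rfl, fun h => absurd h hS⟩
    choose cf hcf0 hcfb using hper
    have hsumnn : (0:ℝ) ≤ ∑ S : Finset (Fin N), cf S :=
      Finset.sum_nonneg fun S _ => hcf0 S
    refine ⟨1 + ∑ S : Finset (Fin N), cf S, by linarith, fun S hS x => ?_⟩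
    refine le_trans (hcfb S hS x) (mul_le_mul_of_nonneg_right ?_
      (Finset.sum_nonneg fun l _ => norm_nonneg _))
    have := Finset.single_le_sum (fun S' (_ : S' ∈ Finset.univ) => hcf0 S') (Finset.mem_univ S)
    linarith
  obtain ⟨C0, hC01, hC0b⟩ := hC0
  -- the constant
  set D : ℝ := C0 * m with hDdef
  have hmR : (1:ℝ) ≤ m := by exact_mod_cast hm
  have hD1 : 1 ≤ D := by nlinarith
  have hDpos : 0 < D := lt_of_lt_of_le zero_lt_one hD1
  set Cb : ℝ≥0∞ := ENNReal.ofReal (D ^ s) with hCbdef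
  have hCbne : Cb ≠ ⊤ := ENNReal.ofReal_ne_top
  -- key pointwise estimate
  have key : ∀ x : Fin m → EuclideanSpace ℝ (Fin k), (∀ j, dotv (v j) x ≠ 0) →
      (1:ℝ≥0∞) ≤ Cb * ∑ B ∈ 𝔅, ∏ j,
        (‖dotv (v j) x‖₊ : ℝ≥0∞) ^ (lam j - bet B j) := by
    intro x hx
    set t : Fin N → ℝ := fun j => ‖dotv (v j) x‖ with htdef
    have htpos : ∀ j, 0 < t j := fun j => norm_pos_iff.2 (hx j)
    obtain ⟨B, hBsub, hBcard, hBbot⟩ := exists_bottom t (m-1) (Finset.univ.erase j0)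
      (by rw [Finset.card_erase_of_mem (Finset.mem_univ j0)]; simp; omega)
    have hBj0 : j0 ∉ B := fun h => (Finset.mem_erase.1 (hBsub h)).1 rfl
    have hBmem : B ∈ 𝔅 := (h𝔅mem B).2 ⟨hBcard, hBj0⟩
    have hQb : ∀ i ∈ Q B, t j0 ≤ D * t i := by
      intro i hiQ
      obtain ⟨hiB, hij0, hipos⟩ := (hQmem B i).1 hiQ
      set S : Finset (Fin N) := insert i B with hS
      have hScard : S.card = m := by
        rw [hS, Finset.card_insert_of_notMem hiB, hBcard]; omega
      have h1 := hC0b S hScard x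
      have h2 : ∑ l ∈ S, ‖dotv (v l) x‖ ≤ (m:ℝ) * t i := by
        have h3 : ∀ l ∈ S, t l ≤ t i := by
          intro l hl
          rcases Finset.mem_insert.1 hl with rfl | hlB
          · exact le_rfl
          · exact hBbot l hlB i (by
              rw [Finset.mem_sdiff, Finset.mem_erase]
              exact ⟨⟨hij0, Finset.mem_univ i⟩, hiB⟩)
        calc ∑ l ∈ S, t l ≤ ∑ l ∈ S, t i := Finset.sum_le_sum h3
          _ = (S.card : ℝ) * t i := by rw [Finset.sum_const, nsmul_eq_mul]
          _ = (m:ℝ) * t i := by rw [hScard]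
      calc t j0 ≤ C0 * ∑ l ∈ S, ‖dotv (v l) x‖ := h1
        _ ≤ C0 * ((m:ℝ) * t i) := by
            apply mul_le_mul_of_nonneg_left h2; linarith
        _ = D * t i := by rw [hDdef]; ring
    -- the total mass on Q B
    have hsumQ : ∑ i ∈ Q B, gam B i = s :=
      (Finset.sum_subset (Finset.subset_univ _)
        (fun i _ hi => hgam_zero B i hi)).trans (hgam_sum B hBmem)
    -- core real inequality
    have hcore : t j0 ^ s ≤ D ^ s * ∏ i ∈ Q B, t i ^ gam B i := by
      have e1 : t j0 ^ s = ∏ i ∈ Q B, t j0 ^ gam B i := by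
        rw [← Real.rpow_sum_of_pos (htpos j0), hsumQ]
      rw [e1]
      calc ∏ i ∈ Q B, t j0 ^ gam B i ≤ ∏ i ∈ Q B, (D * t i) ^ gam B i := by
            apply Finset.prod_le_prod
            · intro i _; positivity
            · intro i hi
              exact Real.rpow_le_rpow (le_of_lt (htpos j0)) (hQb i hi)
                (hgam_nonneg B hBmem i)
        _ = ∏ i ∈ Q B, (D ^ gam B i * t i ^ gam B i) := by
            apply Finset.prod_congr rfl; intro i _
            rw [Real.mul_rpow (le_of_lt hDpos) (le_of_lt (htpos i))]
        _ = (∏ i ∈ Q B, D ^ gam B i) * ∏ i ∈ Q B, t i ^ gam B i :=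
            Finset.prod_mul_distrib
        _ = D ^ s * ∏ i ∈ Q B, t i ^ gam B i := by
            rw [← Real.rpow_sum_of_pos hDpos, hsumQ]
    -- reorganize the full product
    have hexp : ∀ j, t j ^ (lam j - bet B j)
        = (if j = j0 then t j0 ^ (lam j0) else t j ^ (gam B j)) := by
      intro j
      by_cases hj : j = j0
      · rw [hdl B j, if_pos hj, if_pos hj, hj]
      · rw [hdl B j, if_neg hj, if_neg hj]
    have hQsub : Q B ⊆ Finset.univ.erase j0 := by
      intro i hi
      rw [Finset.mem_erase]
      exact ⟨((hQmem B i).1 hi).2.1, Finset.mem_univ i⟩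
    have hPP : ∏ j, t j ^ (lam j - bet B j)
        = t j0 ^ (lam j0) * ∏ i ∈ Q B, t i ^ gam B i := by
      rw [Finset.prod_congr rfl (fun j _ => hexp j)]
      rw [← Finset.mul_prod_erase Finset.univ _ (Finset.mem_univ j0)]
      rw [if_pos rfl]
      congr 1
      rw [Finset.prod_congr rfl (fun i (hi : i ∈ Finset.univ.erase j0) =>
        if_neg (Finset.mem_erase.1 hi).1)]
      symm
      apply Finset.prod_subset hQsub
      intro i _ hiQ
      rw [hgam_zero B i hiQ, Real.rpow_zero]
    have hreal : 1 ≤ D ^ s * ∏ j, t j ^ (lam j - bet B j) := by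
      rw [hPP]
      have htj0 : t j0 ^ (lam j0) = (t j0 ^ s)⁻¹ := by
        rw [← Real.rpow_neg (le_of_lt (htpos j0))]
        congr 1
        rw [hs_def]; ring
      rw [htj0]
      have hpos : 0 < t j0 ^ s := Real.rpow_pos_of_pos (htpos j0) s
      rw [show D ^ s * ((t j0 ^ s)⁻¹ * ∏ i ∈ Q B, t i ^ gam B i)
          = (D ^ s * ∏ i ∈ Q B, t i ^ gam B i) / (t j0 ^ s) by ring]
      rw [le_div_iff₀ hpos, one_mul]
      exact hcore
    -- pass to ℝ≥0∞
    have hprodENN : ∏ j, (‖dotv (v j) x‖₊ : ℝ≥0∞) ^ (lam j - bet B j)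
        = ENNReal.ofReal (∏ j, t j ^ (lam j - bet B j)) := by
      rw [ENNReal.ofReal_prod_of_nonneg
        (fun j _ => Real.rpow_nonneg (norm_nonneg _) _)]
      apply Finset.prod_congr rfl
      intro j _
      rw [show ((‖dotv (v j) x‖₊ : ℝ≥0∞)) = ENNReal.ofReal ‖dotv (v j) x‖ from (ofReal_norm _).symm]
      exact ENNReal.ofReal_rpow_of_pos (htpos j)
    calc (1:ℝ≥0∞) = ENNReal.ofReal 1 := by simp
      _ ≤ ENNReal.ofReal (D ^ s * ∏ j, t j ^ (lam j - bet B j)) :=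
          ENNReal.ofReal_le_ofReal hreal
      _ = Cb * ENNReal.ofReal (∏ j, t j ^ (lam j - bet B j)) := by
          rw [hCbdef, ← ENNReal.ofReal_mul (by positivity)]
      _ = Cb * ∏ j, (‖dotv (v j) x‖₊ : ℝ≥0∞) ^ (lam j - bet B j) := by
          rw [hprodENN]
      _ ≤ Cb * ∑ B' ∈ 𝔅, ∏ j, (‖dotv (v j) x‖₊ : ℝ≥0∞) ^ (lam j - bet B' j) := by
          apply mul_le_mul_right
          exact Finset.single_le_sum
            (f := fun B' => ∏ j, (‖dotv (v j) x‖₊ : ℝ≥0∞) ^ (lam j - bet B' j))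
            (fun _ _ => zero_le) hBmem
  -- conclusion
  have hn : 0 < 𝔅.card := Finset.card_pos.2 h𝔅ne
  refine ⟨𝔅.card, fun a => bet ((𝔅.equivFin.symm a).1), Cb, hn, hCbne, ?_, ?_⟩
  · intro a
    have hBa : ((𝔅.equivFin.symm a).1) ∈ 𝔅 := (𝔅.equivFin.symm a).2
    set B := (𝔅.equivFin.symm a).1 with hBdef
    refine ⟨hscal_bet B hBa, hv1_bet B hBa, hv2_bet B hBa, hI, hbet_j0 B, ?_, ?_⟩
    · intro j hjneg hjj0
      have hjQ : j ∉ Q B := by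
        rw [hQmem]
        push_neg
        intro _ _
        linarith
      rw [hbetdef]
      simp only [hjj0, if_false]
      rw [hgam_zero B j hjQ]
      ring
    · intro j hjnn
      have hjj0 : j ≠ j0 := by
        intro h; rw [h] at hjnn; linarith
      have h1 : gam B j ≤ lam j := hgam_le B hBa j hjnn
      have h2 : 0 ≤ gam B j := hgam_nonneg B hBa j
      rw [hbetdef]
      simp only [hjj0, if_false]
      constructor <;> linarith
  · -- the form inequality
    intro f hf
    have hmeas_dvj : ∀ j, Measurable
        fun x : Fin m → EuclideanSpace ℝ (Fin k) => dotv (v j) x :=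
      fun j => measurable_dotv (v j)
    have hmeasg : ∀ B : Finset (Fin N), Measurable (fun x : Fin m → EuclideanSpace ℝ (Fin k) =>
        ∏ j, ((‖dotv (v j) x‖₊ : ℝ≥0∞) ^ (lam j - bet B j) * f j (dotv (v j) x))) := by
      intro B
      apply Finset.measurable_prod
      intro j _
      apply Measurable.mul
      · exact ((hmeas_dvj j).nnnorm.coe_nnreal_ennreal).pow_const _
      · exact (hf j).comp (hmeas_dvj j)
    have hae : ∀ᵐ x : (Fin m → EuclideanSpace ℝ (Fin k)) ∂volume,
        ∀ j, dotv (v j) x ≠ 0 := by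
      rw [MeasureTheory.ae_all_iff]
      intro j
      rw [MeasureTheory.ae_iff]
      have hset : {x : Fin m → EuclideanSpace ℝ (Fin k) | ¬ dotv (v j) x ≠ 0}
          = {x : Fin m → EuclideanSpace ℝ (Fin k) | dotv (v j) x = 0} := by
        ext x; simp
      rw [hset]
      exact null_dotv hk (v j) (hv0 j)
    have hstep1 : BLform v f ≤ ∫⁻ x : Fin m → EuclideanSpace ℝ (Fin k), Cb * ∑ B ∈ 𝔅,
        ∏ j, ((‖dotv (v j) x‖₊ : ℝ≥0∞) ^ (lam j - bet B j) * f j (dotv (v j) x)) := by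
      apply lintegral_mono_ae
      filter_upwards [hae] with x hx
      calc ∏ j, f j (dotv (v j) x) = 1 * ∏ j, f j (dotv (v j) x) := (one_mul _).symm
        _ ≤ (Cb * ∑ B ∈ 𝔅, ∏ j, (‖dotv (v j) x‖₊ : ℝ≥0∞) ^ (lam j - bet B j))
              * ∏ j, f j (dotv (v j) x) := mul_le_mul_left (key x hx) _
        _ = Cb * ∑ B ∈ 𝔅, ∏ j, ((‖dotv (v j) x‖₊ : ℝ≥0∞) ^ (lam j - bet B j)
              * f j (dotv (v j) x)) := by
            rw [mul_assoc, Finset.sum_mul]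
            congr 1
            apply Finset.sum_congr rfl
            intro B _
            rw [← Finset.prod_mul_distrib]
    have hstep2 : (∫⁻ x : Fin m → EuclideanSpace ℝ (Fin k), Cb * ∑ B ∈ 𝔅,
        ∏ j, ((‖dotv (v j) x‖₊ : ℝ≥0∞) ^ (lam j - bet B j) * f j (dotv (v j) x)))
        = Cb * ∑ B ∈ 𝔅, ∫⁻ x : Fin m → EuclideanSpace ℝ (Fin k),
          ∏ j, ((‖dotv (v j) x‖₊ : ℝ≥0∞) ^ (lam j - bet B j) * f j (dotv (v j) x)) := by
      rw [lintegral_const_mul' _ _ hCbne]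
      congr 1
      exact lintegral_finset_sum _ (fun B _ => hmeasg B)
    have hstep3 : ∑ a : Fin 𝔅.card, BLform v (fun j y =>
          (‖y‖₊ : ℝ≥0∞) ^ (lam j - bet ((𝔅.equivFin.symm a).1) j) * f j y)
        = ∑ B ∈ 𝔅, ∫⁻ x : Fin m → EuclideanSpace ℝ (Fin k),
          ∏ j, ((‖dotv (v j) x‖₊ : ℝ≥0∞) ^ (lam j - bet B j) * f j (dotv (v j) x)) := by
      rw [← Finset.sum_coe_sort 𝔅 (fun B => ∫⁻ x : Fin m → EuclideanSpace ℝ (Fin k),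
        ∏ j, ((‖dotv (v j) x‖₊ : ℝ≥0∞) ^ (lam j - bet B j) * f j (dotv (v j) x)))]
      rw [← Equiv.sum_comp (𝔅.equivFin.symm) (fun b : {B // B ∈ 𝔅} =>
        ∫⁻ x : Fin m → EuclideanSpace ℝ (Fin k),
          ∏ j, ((‖dotv (v j) x‖₊ : ℝ≥0∞) ^ (lam j - bet b.1 j) * f j (dotv (v j) x)))]
      rfl
    rw [hstep3]
    rw [← hstep2]
    exact hstep1
end

section
/- Let m, k be positive integers, let v_1,…,v_N ∈ R^m be nonzero (N > m), and suppose {v_1,…,v_m} is a basis of R^m and v_N ∈ span{v_1,…,v_m} = R^m. Let γ > 0. Then there is a finite constant C, depending only on v_1,…,v_m, v_N, γ, and m, such that for all nonnegative measurable functions f_1,…,f_N on R^k, Λ(f_1,…,f_N) ≤ C Σ_{j=1}^m Λ(f_1,…,f_{j−1}, |·|^{γ} f_j, f_{j+1},…,f_{N−1}, |·|^{−γ} f_N), where |·|^{μ} f denotes the function y ↦ |y|^{μ} f(y) on R^k. -/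
open MeasureTheory ENNReal
open scoped Classical

set_option maxHeartbeats 1000000 in
/-- The spreading estimate: if `{v_1,…,v_m}` is a basis of `ℝᵐ` and `γ > 0`, the form
is controlled by the sum of the forms in which the weight `|·|^γ` is moved from the
last function onto one of the first `m` functions. -/
theorem spreading (m k N : ℕ) (hk : 0 < k) (hmN : m ≤ N)
    (v : Fin (N + 1) → Fin m → ℝ) (hv0 : ∀ i, v i ≠ 0)
    (hLI : LinearIndependent ℝ (fun i : Fin m => v (Fin.castLE (by omega) i)))
    (hspan : Submodule.span ℝ
      (Set.range (fun i : Fin m => v (Fin.castLE (by omega) i))) = ⊤)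
    (hlast : v (Fin.last N) ∈ Submodule.span ℝ
      (Set.range (fun i : Fin m => v (Fin.castLE (by omega) i))))
    (γ : ℝ) (hγ : 0 < γ) :
    ∃ C : ℝ≥0∞, C ≠ ⊤ ∧
      ∀ f : Fin (N + 1) → EuclideanSpace ℝ (Fin k) → ℝ≥0∞, (∀ i, Measurable (f i)) →
        BLform v f ≤ C * ∑ j : Fin m,
          BLform v (fun i =>
            if i = Fin.castLE (by omega) j then
              fun y => (‖y‖₊ : ℝ≥0∞) ^ γ * f i y
            else if i = Fin.last N then
              fun y => (‖y‖₊ : ℝ≥0∞) ^ (-γ) * f i y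
            else f i) := by
  classical
  rcases Nat.eq_zero_or_pos m with hm | hm
  · exact absurd (funext fun i => absurd i.isLt (by omega)) (hv0 0)
  set E := EuclideanSpace ℝ (Fin k)
  have h1 : m ≤ N + 1 := by omega
  set a : Fin m → Fin (N + 1) := fun j => Fin.castLE h1 j with ha
  have ha_ne_last : ∀ j, a j ≠ Fin.last N := by
    intro j h
    have := congrArg Fin.val h
    simp only [a, Fin.castLE, Fin.last] at this
    omega
  set j0 : Fin m := ⟨0, hm⟩
  obtain ⟨c, hc⟩ := (Submodule.mem_span_range_iff_exists_fun ℝ).mp hlast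
  set S : ℝ := ∑ j, |c j| with hSdef
  have hS : 0 < S := by
    rcases (Finset.sum_nonneg fun j _ => abs_nonneg (c j)).lt_or_eq with h | h
    · exact h
    · exfalso
      apply hv0 (Fin.last N)
      rw [← hc]
      have hz := (Finset.sum_eq_zero_iff_of_nonneg (fun j _ => abs_nonneg (c j))).mp h.symm
      exact Finset.sum_eq_zero fun j _ => by
        rw [abs_eq_zero.mp (hz j (Finset.mem_univ j)), zero_smul]
  -- linear identity
  have hdot : ∀ x : Fin m → E, dotv (v (Fin.last N)) x = ∑ j, c j • dotv (v (a j)) x := by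
    intro x
    simp only [dotv, ← hc, Finset.sum_apply, Pi.smul_apply, smul_eq_mul,
      Finset.sum_smul, Finset.smul_sum, mul_smul]
    rw [Finset.sum_comm]
  have hnorm : ∀ x : Fin m → E,
      ‖dotv (v (Fin.last N)) x‖ ≤ ∑ j, |c j| * ‖dotv (v (a j)) x‖ := by
    intro x
    rw [hdot]
    refine (norm_sum_le _ _).trans (le_of_eq (Finset.sum_congr rfl fun j _ => ?_))
    rw [norm_smul, Real.norm_eq_abs]
  set C : ℝ≥0∞ := (ENNReal.ofReal S) ^ γ with hCdef
  have hC : C ≠ ⊤ := ENNReal.rpow_ne_top_of_nonneg hγ.le ENNReal.ofReal_ne_top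
  have hCne : C ≠ 0 := by
    rw [hCdef]
    simp [ENNReal.rpow_eq_zero_iff, ENNReal.ofReal_eq_zero, hS.not_ge]
  set w : Fin m → (Fin m → E) → ℝ≥0∞ := fun j x =>
    (‖dotv (v (a j)) x‖₊ : ℝ≥0∞) ^ γ * (‖dotv (v (Fin.last N)) x‖₊ : ℝ≥0∞) ^ (-γ) with hw
  -- key pointwise claim
  have claim : ∀ x : Fin m → E, dotv (v (a j0)) x ≠ 0 →
      ∃ j : Fin m, 1 ≤ C * w j x := by
    intro x hx
    obtain ⟨j, -, hj⟩ := Finset.exists_max_image Finset.univ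
      (fun j => ‖dotv (v (a j)) x‖) ⟨j0, Finset.mem_univ j0⟩
    by_cases hr : dotv (v (Fin.last N)) x = 0
    · refine ⟨j0, ?_⟩
      have h2 : (‖dotv (v (a j0)) x‖₊ : ℝ≥0∞) ^ γ ≠ 0 := by
        simp [ENNReal.rpow_eq_zero_iff, nnnorm_eq_zero, hx, hγ, hγ.le, not_lt]
      rw [hw]
      simp only [hr, nnnorm_zero, ENNReal.coe_zero, ENNReal.zero_rpow_of_neg (neg_neg_of_pos hγ)]
      rw [ENNReal.mul_top h2, ENNReal.mul_top hCne]
      exact le_top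
    · refine ⟨j, ?_⟩
      have hSd : ‖dotv (v (Fin.last N)) x‖ ≤ S * ‖dotv (v (a j)) x‖ := by
        refine (hnorm x).trans ?_
        rw [hSdef, Finset.sum_mul]
        exact Finset.sum_le_sum fun i _ =>
          mul_le_mul_of_nonneg_left (hj i (Finset.mem_univ i)) (abs_nonneg _)
      have hrne : (‖dotv (v (Fin.last N)) x‖₊ : ℝ≥0∞) ≠ 0 := by
        simpa [nnnorm_eq_zero] using hr
      have hrnt : (‖dotv (v (Fin.last N)) x‖₊ : ℝ≥0∞) ≠ ⊤ := ENNReal.coe_ne_top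
      have hkey : (‖dotv (v (Fin.last N)) x‖₊ : ℝ≥0∞) ≤
          ENNReal.ofReal S * (‖dotv (v (a j)) x‖₊ : ℝ≥0∞) := by
        rw [← enorm_eq_nnnorm, ← ofReal_norm, ← enorm_eq_nnnorm, ← ofReal_norm,
          ← ENNReal.ofReal_mul hS.le]
        exact ENNReal.ofReal_le_ofReal hSd
      have hkey2 : (‖dotv (v (Fin.last N)) x‖₊ : ℝ≥0∞) ^ γ ≤
          C * (‖dotv (v (a j)) x‖₊ : ℝ≥0∞) ^ γ := by
        rw [hCdef, ← ENNReal.mul_rpow_of_nonneg _ _ hγ.le]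
        exact ENNReal.rpow_le_rpow hkey hγ.le
      calc (1 : ℝ≥0∞)
          = (‖dotv (v (Fin.last N)) x‖₊ : ℝ≥0∞) ^ γ *
            (‖dotv (v (Fin.last N)) x‖₊ : ℝ≥0∞) ^ (-γ) := by
            rw [← ENNReal.rpow_add _ _ hrne hrnt]
            simp
        _ ≤ (C * (‖dotv (v (a j)) x‖₊ : ℝ≥0∞) ^ γ) *
            (‖dotv (v (Fin.last N)) x‖₊ : ℝ≥0∞) ^ (-γ) := mul_le_mul_left hkey2 _
        _ = C * w j x := by rw [hw, mul_assoc]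
  -- the null set
  haveI : (volume : Measure (Fin m → E)).IsAddHaarMeasure :=
    { toIsFiniteMeasureOnCompacts := inferInstance
      toIsAddLeftInvariant := inferInstance
      toIsOpenPosMeasure := inferInstance }
  have hnull : volume {x : Fin m → E | dotv (v (a j0)) x = 0} = 0 := by
    set L : (Fin m → E) →ₗ[ℝ] E :=
      { toFun := fun x => dotv (v (a j0)) x
        map_add' := fun x y => by
          simp [dotv, smul_add, Finset.sum_add_distrib]
        map_smul' := fun r x => by
          simp [dotv, Finset.smul_sum, smul_comm r] } with hL
    have hset : {x : Fin m → E | dotv (v (a j0)) x = 0} = (LinearMap.ker L : Set (Fin m → E)) := by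
      ext x; simp [LinearMap.mem_ker, hL]; exact Iff.rfl
    rw [hset]
    refine Measure.addHaar_submodule volume _ ?_
    intro htop
    obtain ⟨i0, hi0⟩ := Function.ne_iff.mp (hv0 (a j0))
    set u : E := EuclideanSpace.single ⟨0, hk⟩ (1 : ℝ) with hu
    have hune : u ≠ 0 := by
      have hn : ‖u‖ = 1 := by
        rw [hu, EuclideanSpace.norm_single]; norm_num
      intro h
      rw [h, norm_zero] at hn
      norm_num at hn
    have hi0' : v (a j0) i0 ≠ 0 := by simpa using hi0
    have hx : L (Pi.single i0 u) ≠ 0 := by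
      have : L (Pi.single i0 u) = v (a j0) i0 • u := by
        simp only [hL, LinearMap.coe_mk, AddHom.coe_mk, dotv]
        rw [Finset.sum_eq_single i0]
        · simp
        · intro b _ hb; simp [Pi.single_eq_of_ne hb]
        · intro h; exact absurd (Finset.mem_univ i0) h
      rw [this]
      exact smul_ne_zero hi0' hune
    exact hx (LinearMap.mem_ker.mp (by rw [htop]; exact Submodule.mem_top))
  refine ⟨C, hC, fun f hf => ?_⟩
  set g : Fin m → Fin (N + 1) → E → ℝ≥0∞ := fun j i =>
    if i = a j then fun y => (‖y‖₊ : ℝ≥0∞) ^ γ * f i y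
    else if i = Fin.last N then fun y => (‖y‖₊ : ℝ≥0∞) ^ (-γ) * f i y
    else f i with hg
  set F : Fin m → (Fin m → E) → ℝ≥0∞ := fun j x => ∏ i, g j i (dotv (v i) x) with hF
  have hFeq : ∀ j x, F j x = w j x * ∏ i, f i (dotv (v i) x) := by
    intro j x
    have hterm : ∀ i : Fin (N + 1), g j i (dotv (v i) x) =
        (if i = a j then (‖dotv (v i) x‖₊ : ℝ≥0∞) ^ γ else 1) *
        ((if i = Fin.last N then (‖dotv (v i) x‖₊ : ℝ≥0∞) ^ (-γ) else 1) *
          f i (dotv (v i) x)) := by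
      intro i
      by_cases h1 : i = a j
      · subst h1
        simp [hg, ha_ne_last j]
      · by_cases h2 : i = Fin.last N
        · subst h2
          simp [hg, Ne.symm (ha_ne_last j)]
        · simp [hg, h1, h2]
    rw [hF]
    simp only [hterm]
    rw [Finset.prod_mul_distrib, Finset.prod_mul_distrib,
      Finset.prod_ite_eq' Finset.univ (a j), Finset.prod_ite_eq' Finset.univ (Fin.last N)]
    simp [hw, mul_assoc]
  have hmeasd : ∀ i : Fin (N + 1), Measurable fun x : Fin m → E => dotv (v i) x := by
    intro i
    exact (continuous_finset_sum _ fun l _ =>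
      (continuous_apply l).const_smul (v i l)).measurable
  have hwmeas : ∀ (μ : ℝ), Measurable fun y : E => (‖y‖₊ : ℝ≥0∞) ^ μ := fun μ =>
    measurable_nnnorm.coe_nnreal_ennreal.pow measurable_const
  have hgmeas : ∀ j i, Measurable (g j i) := by
    intro j i
    simp only [hg]
    split_ifs
    · exact (hwmeas γ).mul (hf i)
    · exact (hwmeas (-γ)).mul (hf i)
    · exact hf i
  have hmeasF : ∀ j, Measurable (F j) := by
    intro j
    exact Finset.measurable_prod _ fun i _ => (hgmeas j i).comp (hmeasd i)
  have hae : ∀ᵐ x : Fin m → E, dotv (v (a j0)) x ≠ 0 := by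
    rw [ae_iff]
    simpa using hnull
  calc BLform v f ≤ ∫⁻ x : Fin m → E, C * ∑ j, F j x := by
        refine lintegral_mono_ae ?_
        filter_upwards [hae] with x hx
        obtain ⟨j, hj⟩ := claim x hx
        calc (∏ i, f i (dotv (v i) x)) = 1 * ∏ i, f i (dotv (v i) x) := (one_mul _).symm
          _ ≤ (C * w j x) * ∏ i, f i (dotv (v i) x) := mul_le_mul_left hj _
          _ = C * F j x := by rw [hFeq, mul_assoc]
          _ ≤ C * ∑ j', F j' x := mul_le_mul_right
              (Finset.single_le_sum (f := fun j' => F j' x)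
                (fun _ _ => zero_le) (Finset.mem_univ j)) C
    _ = C * ∑ j, ∫⁻ x : Fin m → E, F j x := by
        rw [lintegral_const_mul' _ _ hC, lintegral_finset_sum _ fun j _ => hmeasF j]
    _ = C * ∑ j : Fin m, BLform v (fun i =>
            if i = Fin.castLE (by omega) j then
              fun y => (‖y‖₊ : ℝ≥0∞) ^ γ * f i y
            else if i = Fin.last N then
              fun y => (‖y‖₊ : ℝ≥0∞) ^ (-γ) * f i y
            else f i) := rfl
end
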